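/- (Cassaigne) Let u be a one-sided sequence over a finite alphabet with complexity function p_u. Then there exists a constant K with p_u(n) ≤ K·n for all n ≥ 1 if and only if the sequence of first differences p_u(n+1) − p_u(n) is bounded. -/

import Mathlib

/-- The complexity function of a one-sided sequence `u : ℕ → A`. -/
noncomputable def complexityN {A : Type*} (u : ℕ → A) (n : ℕ) : ℕ :=
  {w : Fin n → A | ∃ i : ℕ, ∀ j : Fin n, w j = u (i + (j : ℕ))}.ncard

namespace Cassaigne

open Finset
open scoped Classical

noncomputable section

variable {A : Type*} [Fintype A] (u : ℕ → A)

/-- The window word of length `n` starting at position `i`. -/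
def Wd (n i : ℕ) : Fin n → A := fun j => u (i + (j : ℕ))

/-- `w` occurs at position `i`. -/
def occAt {n : ℕ} (i : ℕ) (w : Fin n → A) : Prop := ∀ j : Fin n, w j = u (i + (j : ℕ))

/-- The finite set of factors of length `n`. -/
def Ln (n : ℕ) : Finset (Fin n → A) := Finset.univ.filter (fun w => ∃ i, occAt u i w)

/-- The complexity function. -/
def p (n : ℕ) : ℕ := (Ln u n).card

lemma mem_Ln {n : ℕ} (w : Fin n → A) : w ∈ Ln u n ↔ ∃ i, occAt u i w := by
  simp [Ln]

lemma wd_mem (n i : ℕ) : Wd u n i ∈ Ln u n := by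
  rw [mem_Ln]; exact ⟨i, fun j => rfl⟩

lemma complexityN_eq_p (n : ℕ) : complexityN u n = p u n := by
  have h : {w : Fin n → A | ∃ i : ℕ, ∀ j : Fin n, w j = u (i + (j : ℕ))} = ↑(Ln u n) := by
    ext w; rw [Set.mem_setOf_eq, Finset.mem_coe, mem_Ln]; rfl
  rw [complexityN, h, Set.ncard_coe_finset, p]

/-- canonical extension letter: the letter following the first occurrence. -/
def ext1 {n : ℕ} (w : Fin n → A) : A :=
  if h : ∃ i, occAt u i w then u (Nat.find h + n) else u 0

lemma snoc_eval {n : ℕ} (w : Fin n → A) (c : A) (j : ℕ) (hj : j < n) (hj' : j < n + 1) :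
    (Fin.snoc w c : Fin (n + 1) → A) ⟨j, hj'⟩ = w ⟨j, hj⟩ := by
  simp [Fin.snoc, hj]

lemma snoc_eval_last {n : ℕ} (w : Fin n → A) (c : A) (h : n < n + 1) :
    (Fin.snoc w c : Fin (n + 1) → A) ⟨n, h⟩ = c := by
  simp [Fin.snoc]

lemma occAt_snoc {n : ℕ} (i : ℕ) (w : Fin n → A) (c : A) :
    occAt u i (Fin.snoc w c) ↔ occAt u i w ∧ c = u (i + n) := by
  constructor
  · intro h
    constructor
    · intro j
      have := h (Fin.castSucc j)
      rwa [Fin.snoc_castSucc, Fin.coe_castSucc] at this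
    · have := h (Fin.last n)
      rwa [Fin.snoc_last, Fin.val_last] at this
  · rintro ⟨h1, h2⟩ j
    rcases Nat.lt_or_ge (j : ℕ) n with hj | hj
    · have hje : j = Fin.castSucc ⟨(j : ℕ), hj⟩ := by
        apply Fin.ext; simp
      rw [hje, Fin.snoc_castSucc]
      exact h1 _
    · have hje : j = Fin.last n := by
        apply Fin.ext; simp; omega
      rw [hje, Fin.snoc_last, Fin.val_last]
      exact h2

lemma init_mem {n : ℕ} (x : Fin (n + 1) → A) (hx : x ∈ Ln u (n + 1)) :
    Fin.init x ∈ Ln u n := by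
  rw [mem_Ln] at hx ⊢
  obtain ⟨i, hi⟩ := hx
  refine ⟨i, fun j => ?_⟩
  have := hi (Fin.castSucc j)
  rwa [Fin.coe_castSucc] at this

lemma snoc_ext1_mem {n : ℕ} (w : Fin n → A) (hw : w ∈ Ln u n) :
    Fin.snoc w (ext1 u w) ∈ Ln u (n + 1) := by
  rw [mem_Ln] at hw ⊢
  refine ⟨Nat.find hw, ?_⟩
  rw [occAt_snoc]
  refine ⟨Nat.find_spec hw, ?_⟩
  rw [ext1, dif_pos hw]

/-- The set counting `p (m+1) - p m`: extended factors with a non-canonical last letter. -/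
def Sm (m : ℕ) : Finset (Fin (m + 1) → A) :=
  (Ln u (m + 1)).filter (fun x => x (Fin.last m) ≠ ext1 u (Fin.init x))

def s (m : ℕ) : ℕ := (Sm u m).card

lemma p_succ (m : ℕ) : p u (m + 1) = p u m + s u m := by
  classical
  have hsplit := Finset.card_filter_add_card_filter_not
    (s := Ln u (m + 1)) (p := fun x => x (Fin.last m) ≠ ext1 u (Fin.init x))
  have hT : ((Ln u (m + 1)).filter
      (fun x => ¬ x (Fin.last m) ≠ ext1 u (Fin.init x))).card = p u m := by
    apply Finset.card_bij (fun x _ => Fin.init x)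
    · intro x hx
      rw [Finset.mem_filter] at hx
      exact init_mem u x hx.1
    · intro x hx y hy hxy
      rw [Finset.mem_filter, not_not] at hx hy
      have ex : x = Fin.snoc (Fin.init x) (x (Fin.last m)) := (Fin.snoc_init_self x).symm
      have ey : y = Fin.snoc (Fin.init y) (y (Fin.last m)) := (Fin.snoc_init_self y).symm
      rw [ex, ey, hx.2, hy.2, hxy]
    · intro w hw
      refine ⟨Fin.snoc w (ext1 u w), ?_, ?_⟩
      · rw [Finset.mem_filter, not_not]
        refine ⟨snoc_ext1_mem u w hw, ?_⟩
        rw [Fin.snoc_last, Fin.init_snoc]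
      · rw [Fin.init_snoc]
  have hs : s u m = ((Ln u (m + 1)).filter
      (fun x => x (Fin.last m) ≠ ext1 u (Fin.init x))).card := rfl
  show (Ln u (m + 1)).card = p u m + s u m
  rw [← hsplit, hT, hs]
  exact Nat.add_comm _ _

lemma p_le_succ (m : ℕ) : p u m ≤ p u (m + 1) := by
  rw [p_succ]; omega

lemma p_mono : Monotone (p u) := monotone_nat_of_le_succ (p_le_succ u)

lemma p_telescope (a b : ℕ) :
    p u (a + b) = p u a + ∑ j ∈ Finset.Ico a (a + b), s u j := by
  induction b with
  | zero => simp
  | succ b ih =>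
    have h1 : a + (b + 1) = (a + b) + 1 := by omega
    rw [h1, p_succ, ih, Finset.sum_Ico_succ_top (by omega : a ≤ a + b)]
    omega

lemma s_eq_sub (m : ℕ) : p u (m + 1) - p u m = s u m := by
  rw [p_succ]; omega

lemma p_le_card (n : ℕ) : p u n ≤ Fintype.card A ^ n := by
  calc p u n ≤ Fintype.card (Fin n → A) := Finset.card_le_univ _
  _ = Fintype.card A ^ n := by simp

/-- Right special factors. -/
def RS {n : ℕ} (w : Fin n → A) : Prop :=
  w ∈ Ln u n ∧ ∃ c, c ≠ ext1 u w ∧ Fin.snoc w c ∈ Ln u (n + 1)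

lemma RS_init_of_Sm {m : ℕ} (x : Fin (m + 1) → A) (hx : x ∈ Sm u m) :
    RS u (Fin.init x) := by
  rw [Sm, Finset.mem_filter] at hx
  refine ⟨init_mem u x hx.1, x (Fin.last m), hx.2, ?_⟩
  rw [Fin.snoc_init_self]
  exact hx.1

/-- suffix of length n of a word of length ℓ + n -/
def sufN (ℓ : ℕ) {n : ℕ} (w : Fin (ℓ + n) → A) : Fin n → A := fun t => w (Fin.natAdd ℓ t)

lemma occAt_sufN (ℓ n : ℕ) (w : Fin (ℓ + n) → A) (i : ℕ) (hi : occAt u i w) :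
    occAt u (i + ℓ) (sufN ℓ w) := by
  intro t
  have := hi (Fin.natAdd ℓ t)
  rw [sufN, this]
  congr 1
  simp
  omega

lemma sufN_mem (ℓ n : ℕ) (w : Fin (ℓ + n) → A) (hw : w ∈ Ln u (ℓ + n)) :
    sufN ℓ w ∈ Ln u n := by
  rw [mem_Ln] at hw ⊢
  obtain ⟨i, hi⟩ := hw
  exact ⟨i + ℓ, occAt_sufN u ℓ n w i hi⟩

lemma snoc_sufN_mem (ℓ n : ℕ) (w : Fin (ℓ + n) → A) (c : A)
    (h : Fin.snoc w c ∈ Ln u (ℓ + n + 1)) : Fin.snoc (sufN ℓ w) c ∈ Ln u (n + 1) := by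
  rw [mem_Ln] at h ⊢
  obtain ⟨i, hi⟩ := h
  rw [occAt_snoc] at hi
  refine ⟨i + ℓ, ?_⟩
  rw [occAt_snoc]
  refine ⟨occAt_sufN u ℓ n w i hi.1, ?_⟩
  rw [hi.2]
  congr 1
  omega

lemma RS_sufN (ℓ n : ℕ) (w : Fin (ℓ + n) → A) (hw : RS u w) : RS u (sufN ℓ w) := by
  obtain ⟨hwL, c, hc, hcsnoc⟩ := hw
  have h1 : Fin.snoc (sufN ℓ w) c ∈ Ln u (n + 1) := snoc_sufN_mem u ℓ n w c hcsnoc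
  have h2 : Fin.snoc (sufN ℓ w) (ext1 u w) ∈ Ln u (n + 1) :=
    snoc_sufN_mem u ℓ n w (ext1 u w) (snoc_ext1_mem u w hwL)
  refine ⟨sufN_mem u ℓ n w hwL, ?_⟩
  by_cases hce : c = ext1 u (sufN ℓ w)
  · refine ⟨ext1 u w, ?_, h2⟩
    rw [← hce]
    exact fun h => hc h.symm
  · exact ⟨c, hce, h1⟩

/-- hosting: window `X` contains a marker from `G` at offset `r`. -/
def host {N M : ℕ} (G : Finset (Fin M → A)) (X : Fin N → A) (r : ℕ) : Prop :=
  r + M ≤ N ∧ ∃ g ∈ G, ∀ s : ℕ, ∀ hs : s < M, ∀ hr : r + s < N, X ⟨r + s, hr⟩ = g ⟨s, hs⟩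

lemma packing (S : Finset ℕ) (N n B : ℕ) (hN : ∀ r ∈ S, r < N) (hB : 2 * N ≤ (n + 1) * B)
    (hsep : ∀ r ∈ S, ∀ r' ∈ S, r < r' → n + 1 ≤ 2 * (r' - r)) : S.card ≤ B := by
  classical
  have key : ∀ r ∈ S, ∀ r' ∈ S, 2 * r / (n + 1) = 2 * r' / (n + 1) → r = r' := by
    intro r hr r' hr' hq
    by_contra hne
    rcases Nat.lt_or_ge r r' with h | h
    · have hsep' := hsep r hr r' hr' h
      have e1 := Nat.div_add_mod (2 * r) (n + 1)
      rw [hq] at e1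
      have e2 := Nat.div_add_mod (2 * r') (n + 1)
      have m1 := Nat.mod_lt (2 * r) (y := n + 1) (by omega)
      have m2 := Nat.mod_lt (2 * r') (y := n + 1) (by omega)
      omega
    · have hlt : r' < r := by omega
      have hsep' := hsep r' hr' r hr hlt
      have e1 := Nat.div_add_mod (2 * r) (n + 1)
      rw [hq] at e1
      have e2 := Nat.div_add_mod (2 * r') (n + 1)
      have m1 := Nat.mod_lt (2 * r) (y := n + 1) (by omega)
      have m2 := Nat.mod_lt (2 * r') (y := n + 1) (by omega)
      omega
  calc S.card ≤ (Finset.range B).card := by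
        apply Finset.card_le_card_of_injOn (fun r => 2 * r / (n + 1))
        · intro r hr
          rw [Finset.mem_coe, Finset.mem_range]
          have : 2 * r < (n + 1) * B := by
            have := hN r hr; omega
          exact Nat.div_lt_of_lt_mul this
        · intro r hr r' hr' h
          exact key r hr r' hr' h
  _ = B := Finset.card_range B

lemma countMarkers (K n M : ℕ) (hn : 1 ≤ n) (hM1 : 1 ≤ M) (hM2 : M ≤ 2 * n + 1)
    (hp6 : p u (6 * n) ≤ K * (6 * n))
    (G : Finset (Fin M → A)) (hG : ∀ g ∈ G, g ∈ Ln u M)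
    (hsep : ∀ (N : ℕ) (X : Fin N → A) (r r' : ℕ),
      host G X r → host G X r' → r < r' → n + 1 ≤ 2 * (r' - r)) :
    G.card ≤ 18 * K + 16 := by
  classical
  set good : (Fin M → A) → Prop := fun g => ∃ i, 6 * n ≤ i ∧ occAt u i g with hgood
  have hostSmall : ∀ (N : ℕ) (X : Fin N → A) (B : ℕ), 2 * N ≤ (n + 1) * B →
      ((Finset.range N).filter (host G X)).card ≤ B := by
    intro N X B hB
    apply packing _ N n B
    · intro r hr
      rw [Finset.mem_filter, Finset.mem_range] at hr
      exact hr.1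
    · exact hB
    · intro r hr r' hr' hlt
      rw [Finset.mem_filter] at hr hr'
      exact hsep N X r r' hr.2 hr'.2 hlt
  -- the bad (transient) markers
  have hbad : (G.filter (fun g => ¬ good g)).card ≤ 16 := by
    have hmap : ∀ g ∈ G.filter (fun g => ¬ good g),
        ∃ r, r ∈ (Finset.range (8 * n)).filter (host G (Wd u (8 * n) 0)) ∧
          occAt u r g := by
      intro g hg
      rw [Finset.mem_filter] at hg
      obtain ⟨hgG, hgb⟩ := hg
      obtain ⟨i, hi⟩ := (mem_Ln u g).mp (hG g hgG)
      have hilt : i < 6 * n := by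
        by_contra hge
        rw [hgood] at hgb
        exact hgb ⟨i, by omega, hi⟩
      refine ⟨i, ?_, hi⟩
      rw [Finset.mem_filter, Finset.mem_range]
      refine ⟨by omega, by omega, g, hgG, ?_⟩
      intro s hs hr
      have hv := hi ⟨s, hs⟩
      show u (0 + (i + s)) = g ⟨s, hs⟩
      rw [hv]
      norm_num
    calc (G.filter (fun g => ¬ good g)).card ≤
        ((Finset.range (8 * n)).filter (host G (Wd u (8 * n) 0))).card := by
          apply Finset.card_le_card_of_injOn
            (fun g => if h : ∃ r, r ∈ (Finset.range (8 * n)).filter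
              (host G (Wd u (8 * n) 0)) ∧ occAt u r g then h.choose else 0)
          · intro g hg
            obtain ⟨r, hr1, hr2⟩ := hmap g hg
            have hex : ∃ r, r ∈ (Finset.range (8 * n)).filter
              (host G (Wd u (8 * n) 0)) ∧ occAt u r g := ⟨r, hr1, hr2⟩
            dsimp only
            rw [Finset.mem_coe, dif_pos hex]
            exact hex.choose_spec.1
          · intro g hg g' hg' hf
            obtain ⟨r, hr1, hr2⟩ := hmap g hg
            obtain ⟨r', hr1', hr2'⟩ := hmap g' hg'
            have hex : ∃ r, r ∈ (Finset.range (8 * n)).filter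
              (host G (Wd u (8 * n) 0)) ∧ occAt u r g := ⟨r, hr1, hr2⟩
            have hex' : ∃ r, r ∈ (Finset.range (8 * n)).filter
              (host G (Wd u (8 * n) 0)) ∧ occAt u r g' := ⟨r', hr1', hr2'⟩
            have hf2 : (if h : ∃ r ∈ (Finset.range (8 * n)).filter
                  (host G (Wd u (8 * n) 0)), occAt u r g then h.choose else 0) =
                (if h : ∃ r ∈ (Finset.range (8 * n)).filter
                  (host G (Wd u (8 * n) 0)), occAt u r g' then h.choose else 0) := hf
            rw [dif_pos hex, dif_pos hex'] at hf2
            have ho := hex.choose_spec.2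
            have ho' := hex'.choose_spec.2
            rw [hf2] at ho
            funext j
            rw [ho j, ho' j]
    _ ≤ 16 := hostSmall _ _ 16 (by omega)
  -- occurrence choice for good markers
  set ig : (Fin M → A) → ℕ := fun g => if h : good g then h.choose else 0 with hig
  have higspec : ∀ g, good g → 6 * n ≤ ig g ∧ occAt u (ig g) g := by
    intro g hg
    rw [hig]
    simp only [dif_pos hg]
    exact hg.choose_spec
  -- the pairs (window, offset)
  set PAIRS := ((Ln u (6 * n)) ×ˢ Finset.range (6 * n)).filter
    (fun Xr => host G Xr.1 Xr.2) with hPAIRS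
  have hPcard : PAIRS.card ≤ 12 * p u (6 * n) := by
    apply Finset.card_le_mul_card_image_of_maps_to (f := Prod.fst)
      (t := Ln u (6 * n))
    · intro a ha
      rw [hPAIRS, Finset.mem_filter, Finset.mem_product] at ha
      exact ha.1.1
    · intro X hX
      calc (PAIRS.filter (fun a => a.1 = X)).card ≤
          ((Finset.range (6 * n)).filter (host G X)).card := by
            apply Finset.card_le_card_of_injOn Prod.snd
            · intro a ha
              rw [Finset.mem_coe, Finset.mem_filter, hPAIRS, Finset.mem_filter,
                Finset.mem_product] at ha
              rw [Finset.mem_coe, Finset.mem_filter]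
              obtain ⟨⟨⟨ha1, ha2⟩, ha3⟩, ha4⟩ := ha
              rw [ha4] at ha3
              exact ⟨ha2, ha3⟩
            · rintro ⟨X1, r1⟩ h1 ⟨X2, r2⟩ h2 heq
              rw [Finset.mem_coe, Finset.mem_filter] at h1 h2
              have e1 : X1 = X := h1.2
              have e2 : X2 = X := h2.2
              have e3 : r1 = r2 := heq
              rw [e1, e2, e3]
      _ ≤ 12 := hostSmall _ _ 12 (by omega)
  have hinj : ((G.filter good) ×ˢ Finset.range (4 * n)).card ≤ PAIRS.card := by
    apply Finset.card_le_card_of_injOn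
      (fun gt => (Wd u (6 * n) (ig gt.1 - (6 * n - (M + gt.2))), 6 * n - (M + gt.2)))
    · rintro ⟨g, t⟩ hgt
      rw [Finset.mem_coe, Finset.mem_product, Finset.mem_filter, Finset.mem_range] at hgt
      obtain ⟨⟨hgG, hggood⟩, ht⟩ := hgt
      obtain ⟨hi6, hocc⟩ := higspec g hggood
      have hMt : M + t ≤ 6 * n := by omega
      set D := 6 * n - (M + t) with hD
      have hDle : D ≤ ig g := by omega
      dsimp only
      rw [hPAIRS, Finset.mem_coe, Finset.mem_filter, Finset.mem_product]
      refine ⟨⟨wd_mem u (6 * n) _, Finset.mem_range.mpr (by omega)⟩, by omega, g, hgG, ?_⟩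
      intro s hs hr
      have hv := hocc ⟨s, hs⟩
      show u ((ig g - D) + (D + s)) = g ⟨s, hs⟩
      rw [hv]
      congr 1
      simp
      omega
    · rintro ⟨g, t⟩ hgt ⟨g', t'⟩ hgt' heq
      rw [Finset.mem_coe, Finset.mem_product, Finset.mem_filter, Finset.mem_range] at hgt hgt'
      obtain ⟨⟨hgG, hggood⟩, ht⟩ := hgt
      obtain ⟨⟨hgG', hggood'⟩, ht'⟩ := hgt'
      obtain ⟨hi6, hocc⟩ := higspec g hggood
      obtain ⟨hi6', hocc'⟩ := higspec g' hggood'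
      have hMt : M + t ≤ 6 * n := by omega
      have hMt' : M + t' ≤ 6 * n := by omega
      have hsnd : 6 * n - (M + t) = 6 * n - (M + t') := congrArg Prod.snd heq
      have htt : t = t' := by omega
      have hfst : Wd u (6 * n) (ig g - (6 * n - (M + t))) =
          Wd u (6 * n) (ig g' - (6 * n - (M + t'))) := congrArg Prod.fst heq
      set D := 6 * n - (M + t) with hD
      have hD' : 6 * n - (M + t') = D := by omega
      rw [hD'] at hfst
      have hgg : g = g' := by
        funext j
        have hb : D + (j : ℕ) < 6 * n := by
          have := j.isLt; omega
        have hw := congrFun hfst ⟨D + (j : ℕ), hb⟩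
        have hv := hocc j
        have hv' := hocc' j
        have h1 : (ig g - D) + (D + (j : ℕ)) = ig g + (j : ℕ) := by omega
        have h2 : (ig g' - D) + (D + (j : ℕ)) = ig g' + (j : ℕ) := by omega
        rw [show (Wd u (6 * n) (ig g - D) ⟨D + (j : ℕ), hb⟩ : A) =
          u ((ig g - D) + (D + (j : ℕ))) from rfl,
          show (Wd u (6 * n) (ig g' - D) ⟨D + (j : ℕ), hb⟩ : A) =
          u ((ig g' - D) + (D + (j : ℕ))) from rfl, h1, h2] at hw
        rw [hv, hv', hw]
      rw [htt, hgg]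
  rw [Finset.card_product, Finset.card_range] at hinj
  have hgoodcard : (G.filter good).card ≤ 18 * K := by
    have h72 : 12 * p u (6 * n) ≤ 18 * K * (4 * n) := by
      calc 12 * p u (6 * n) ≤ 12 * (K * (6 * n)) := Nat.mul_le_mul_left _ hp6
      _ = 18 * K * (4 * n) := by ring
    have : (G.filter good).card * (4 * n) ≤ 18 * K * (4 * n) := le_trans hinj (le_trans hPcard h72)
    exact Nat.le_of_mul_le_mul_right this (by omega)
  have hsplit := Finset.card_filter_add_card_filter_not
    (s := G) (p := good)
  omega

lemma fread {β : Sort*} {N : ℕ} (X : Fin N → β) (a b : ℕ) (ha : a < N) (hb : b < N)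
    (h : a = b) : X ⟨a, ha⟩ = X ⟨b, hb⟩ := by subst h; rfl

lemma fiber (K n ℓ : ℕ) (h1 : 1 ≤ ℓ) (h2 : ℓ ≤ n)
    (hp6 : p u (6 * n) ≤ K * (6 * n)) (v : Fin n → A) :
    ((Ln u (ℓ + n)).filter (fun w => RS u w ∧ sufN ℓ w = v)).card ≤ 18 * K + 16 := by
  classical
  have hn : 1 ≤ n := le_trans h1 h2
  set F := (Ln u (ℓ + n)).filter (fun w => RS u w ∧ sufN ℓ w = v) with hF
  set Perv : ℕ → Prop := fun d => ∀ t : ℕ, ∀ ht : t + d < n, v ⟨t + d, ht⟩ = v ⟨t, by omega⟩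
    with hPerv
  set z : A := if h : ∃ d, 1 ≤ d ∧ 2 * d ≤ n ∧ Perv d then
      v ⟨n - h.choose, by obtain ⟨ha, hb, _⟩ := h.choose_spec; omega⟩ else u 0 with hz
  set cw : (Fin (ℓ + n) → A) → A := fun w =>
    if h : ∃ c, c ≠ z ∧ Fin.snoc w c ∈ Ln u (ℓ + n + 1) then h.choose else u 0 with hcw
  have hcwspec : ∀ w ∈ F, cw w ≠ z ∧ Fin.snoc w (cw w) ∈ Ln u (ℓ + n + 1) := by
    intro w hw
    rw [hF, Finset.mem_filter] at hw
    obtain ⟨hwL, hwRS, hwsuf⟩ := hw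
    obtain ⟨_, c, hc, hcL⟩ := hwRS
    have hex : ∃ c, c ≠ z ∧ Fin.snoc w c ∈ Ln u (ℓ + n + 1) := by
      by_cases hez : ext1 u w = z
      · refine ⟨c, ?_, hcL⟩
        rw [← hez]
        exact hc
      · exact ⟨ext1 u w, hez, snoc_ext1_mem u w hwL⟩
    rw [hcw]
    simp only [dif_pos hex]
    exact hex.choose_spec
  set G := F.image (fun w => (Fin.snoc w (cw w) : Fin (ℓ + n + 1) → A)) with hG
  have hcardFG : F.card = G.card := by
    rw [hG]
    symm
    apply Finset.card_image_of_injOn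
    intro w hw w' hw' he
    have he' : (Fin.snoc w (cw w) : Fin (ℓ + n + 1) → A) = Fin.snoc w' (cw w') := he
    have h0 : Fin.init (Fin.snoc w (cw w) : Fin (ℓ + n + 1) → A) =
        Fin.init (Fin.snoc w' (cw w') : Fin (ℓ + n + 1) → A) := by rw [he']
    rwa [Fin.init_snoc, Fin.init_snoc] at h0
  have hGmem : ∀ g ∈ G, g ∈ Ln u (ℓ + n + 1) := by
    intro g hg
    rw [hG, Finset.mem_image] at hg
    obtain ⟨w, hwF, rfl⟩ := hg
    exact (hcwspec w hwF).2
  have hostRead : ∀ (N : ℕ) (X : Fin N → A) (r : ℕ), host G X r →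
      ∃ w ∈ F, (∀ t : ℕ, ∀ ht : t < n, ∀ hb : r + ℓ + t < N,
          X ⟨r + ℓ + t, hb⟩ = v ⟨t, ht⟩) ∧
        (∀ hb : r + (ℓ + n) < N, X ⟨r + (ℓ + n), hb⟩ = cw w) := by
    intro N X r hh
    obtain ⟨hrM, g, hgG, hread⟩ := hh
    rw [hG, Finset.mem_image] at hgG
    obtain ⟨w, hwF, rfl⟩ := hgG
    have hsuf : sufN ℓ w = v := by
      have hw := hwF
      rw [hF, Finset.mem_filter] at hw
      exact hw.2.2
    refine ⟨w, hwF, ?_, ?_⟩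
    · intro t ht hb
      have hs : ℓ + t < ℓ + n + 1 := by omega
      have hb' : r + (ℓ + t) < N := by omega
      have h0 := hread (ℓ + t) hs hb'
      have e1 : X ⟨r + ℓ + t, hb⟩ = X ⟨r + (ℓ + t), hb'⟩ := fread X _ _ _ _ (by omega)
      rw [e1, h0]
      have e2 : (Fin.snoc w (cw w) : Fin (ℓ + n + 1) → A) ⟨ℓ + t, hs⟩ =
          w ⟨ℓ + t, by omega⟩ := snoc_eval w (cw w) (ℓ + t) (by omega) hs
      rw [e2, ← hsuf]
      rfl
    · intro hb
      have hs : ℓ + n < ℓ + n + 1 := by omega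
      have h0 := hread (ℓ + n) hs hb
      rw [h0]
      exact snoc_eval_last w (cw w) hs
  have hsep : ∀ (N : ℕ) (X : Fin N → A) (r r' : ℕ),
      host G X r → host G X r' → r < r' → n + 1 ≤ 2 * (r' - r) := by
    intro N X r r' hh hh' hlt
    by_contra hcon
    push_neg at hcon
    have hg1 : 1 ≤ r' - r := by omega
    have hg2 : 2 * (r' - r) ≤ n := by omega
    set g := r' - r with hgdef
    have hrr : r' = r + g := by omega
    obtain ⟨w1, hw1F, hv1, hlast1⟩ := hostRead N X r hh
    obtain ⟨w2, hw2F, hv2, hlast2⟩ := hostRead N X r' hh'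
    have hrM : r + (ℓ + n + 1) ≤ N := hh.1
    have hrM' : r' + (ℓ + n + 1) ≤ N := hh'.1
    by_cases hper : ∃ d, 1 ≤ d ∧ 2 * d ≤ n ∧ Perv d
    · obtain ⟨hd1, hd2, hdP⟩ := hper.choose_spec
      set d := hper.choose with hd
      have hzeq : z = v ⟨n - d, by omega⟩ := by
        have h0 := hz
        rw [dif_pos hper] at h0
        rw [h0]
      have hbA : r + (ℓ + n) < N := by omega
      have A1 : X ⟨r + (ℓ + n), hbA⟩ = cw w1 := hlast1 hbA
      have hb2 : r' + ℓ + (n - g) < N := by omega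
      have A2 : X ⟨r + (ℓ + n), hbA⟩ = v ⟨n - g, by omega⟩ := by
        have h0 := hv2 (n - g) (by omega) hb2
        rw [← h0]
        exact fread X _ _ _ _ (by omega)
      have A3 : (v ⟨n - g, by omega⟩ : A) = v ⟨n - g - d, by omega⟩ := by
        have h0 := hdP (n - g - d) (by omega)
        rw [← h0]
        exact fread v _ _ _ _ (by omega)
      have hb3 : r' + ℓ + (n - g - d) < N := by omega
      have hb4 : r + ℓ + (n - d) < N := by omega
      have A4 : (v ⟨n - g - d, by omega⟩ : A) = v ⟨n - d, by omega⟩ := by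
        have h0 := hv2 (n - g - d) (by omega) hb3
        have h0' := hv1 (n - d) (by omega) hb4
        rw [← h0, ← h0']
        exact fread X _ _ _ _ (by omega)
      have : cw w1 = z := by
        rw [← A1, A2, A3, A4, hzeq]
      exact (hcwspec w1 hw1F).1 this
    · apply hper
      refine ⟨g, hg1, by omega, ?_⟩
      intro t ht
      have hbt : r + ℓ + (t + g) < N := by omega
      have hbt' : r' + ℓ + t < N := by omega
      have e1 := hv1 (t + g) (by omega) hbt
      have e2 := hv2 t (by omega) hbt'
      have e3 : X ⟨r + ℓ + (t + g), hbt⟩ = X ⟨r' + ℓ + t, hbt'⟩ :=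
        fread X _ _ _ _ (by omega)
      rw [← e1, e3, e2]
  have hcount := countMarkers u K n (ℓ + n + 1) hn (by omega) (by omega) hp6 G hGmem hsep
  rw [hF] at hcardFG
  rw [hcardFG]
  exact hcount

lemma s_le_chain (K n ℓ : ℕ) (h1 : 1 ≤ ℓ) (h2 : ℓ ≤ n)
    (hp6 : p u (6 * n) ≤ K * (6 * n)) :
    s u (ℓ + n) ≤ Fintype.card A * ((18 * K + 16) * s u n) := by
  classical
  have hmemRSm : ∀ w ∈ (Sm u (ℓ + n)).image Fin.init, w ∈ Ln u (ℓ + n) ∧ RS u w := by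
    intro w hw
    rw [Finset.mem_image] at hw
    obtain ⟨x, hx, rfl⟩ := hw
    have hxL : x ∈ Ln u (ℓ + n + 1) := Finset.mem_of_mem_filter _ hx
    exact ⟨init_mem u x hxL, RS_init_of_Sm u x hx⟩
  have step1 : s u (ℓ + n) ≤
      Fintype.card A * ((Sm u (ℓ + n)).image Fin.init).card := by
    apply Finset.card_le_mul_card_image (f := Fin.init) (Sm u (ℓ + n))
    intro w _
    calc ((Sm u (ℓ + n)).filter (fun x => Fin.init x = w)).card
        ≤ (Finset.univ : Finset A).card := by
          apply Finset.card_le_card_of_injOn (fun x => x (Fin.last (ℓ + n)))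
          · intro x _; exact Finset.mem_univ _
          · intro x hx y hy hxy
            rw [Finset.mem_coe, Finset.mem_filter] at hx hy
            have ex : x = Fin.snoc (Fin.init x) (x (Fin.last (ℓ + n))) :=
              (Fin.snoc_init_self x).symm
            have ey : y = Fin.snoc (Fin.init y) (y (Fin.last (ℓ + n))) :=
              (Fin.snoc_init_self y).symm
            have hxy' : x (Fin.last (ℓ + n)) = y (Fin.last (ℓ + n)) := hxy
            rw [ex, ey, hx.2, hy.2, hxy']
    _ = Fintype.card A := Finset.card_univ
  have step2 : ((Sm u (ℓ + n)).image Fin.init).card ≤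
      (18 * K + 16) * (((Sm u (ℓ + n)).image Fin.init).image (sufN ℓ)).card := by
    apply Finset.card_le_mul_card_image (f := sufN ℓ)
    intro v _
    calc (((Sm u (ℓ + n)).image Fin.init).filter (fun w => sufN ℓ w = v)).card
        ≤ ((Ln u (ℓ + n)).filter (fun w => RS u w ∧ sufN ℓ w = v)).card := by
          apply Finset.card_le_card
          intro w hw
          rw [Finset.mem_filter] at hw ⊢
          obtain ⟨hw1, hw2⟩ := hw
          obtain ⟨hwL, hwRS⟩ := hmemRSm w hw1
          exact ⟨hwL, hwRS, hw2⟩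
    _ ≤ 18 * K + 16 := fiber u K n ℓ h1 h2 hp6 v
  have step3 : (((Sm u (ℓ + n)).image Fin.init).image (sufN ℓ)).card ≤ s u n := by
    set cv : (Fin n → A) → A := fun v =>
      if h : ∃ c, c ≠ ext1 u v ∧ Fin.snoc v c ∈ Ln u (n + 1) then h.choose else u 0 with hcv
    have hcvspec : ∀ v ∈ ((Sm u (ℓ + n)).image Fin.init).image (sufN ℓ),
        cv v ≠ ext1 u v ∧ Fin.snoc v (cv v) ∈ Ln u (n + 1) := by
      intro v hv
      rw [Finset.mem_image] at hv
      obtain ⟨w, hw, rfl⟩ := hv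
      obtain ⟨hwL, hwRS⟩ := hmemRSm w hw
      have hex : ∃ c, c ≠ ext1 u (sufN ℓ w) ∧ Fin.snoc (sufN ℓ w) c ∈ Ln u (n + 1) :=
        (RS_sufN u ℓ n w hwRS).2
      rw [hcv]
      simp only [dif_pos hex]
      exact hex.choose_spec
    apply Finset.card_le_card_of_injOn (fun v => (Fin.snoc v (cv v) : Fin (n + 1) → A))
    · intro v hv
      obtain ⟨hc1, hc2⟩ := hcvspec v hv
      dsimp only
      rw [Sm, Finset.mem_coe, Finset.mem_filter]
      refine ⟨hc2, ?_⟩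
      rw [Fin.snoc_last, Fin.init_snoc]
      exact hc1
    · intro v hv v' hv' hvv
      have hvv' : (Fin.snoc v (cv v) : Fin (n + 1) → A) = Fin.snoc v' (cv v') := hvv
      have : Fin.init (Fin.snoc v (cv v) : Fin (n + 1) → A) =
          Fin.init (Fin.snoc v' (cv v') : Fin (n + 1) → A) := by rw [hvv']
      rwa [Fin.init_snoc, Fin.init_snoc] at this
  calc s u (ℓ + n) ≤ Fintype.card A * ((Sm u (ℓ + n)).image Fin.init).card := step1
  _ ≤ Fintype.card A * ((18 * K + 16) *
      (((Sm u (ℓ + n)).image Fin.init).image (sufN ℓ)).card) :=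
        Nat.mul_le_mul_left _ step2
  _ ≤ Fintype.card A * ((18 * K + 16) * s u n) :=
        Nat.mul_le_mul_left _ (Nat.mul_le_mul_left _ step3)

lemma exists_good (K m : ℕ) (hm : 2 ≤ m) (hp : ∀ j, 1 ≤ j → p u j ≤ K * j) :
    ∃ n, m ≤ 2 * n ∧ n < m ∧ s u n ≤ 4 * K := by
  by_contra hcon
  push_neg at hcon
  set f := m / 2 with hf
  have hf1 : 1 ≤ f := by omega
  have hsum : p u m = p u (m - f) + ∑ j ∈ Finset.Ico (m - f) m, s u j := by
    have h := p_telescope u (m - f) f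
    rw [show m - f + f = m by omega] at h
    exact h
  have hlb : ∀ j ∈ Finset.Ico (m - f) m, 4 * K + 1 ≤ s u j := by
    intro j hj
    rw [Finset.mem_Ico] at hj
    have h2n : m ≤ 2 * j := by omega
    have := hcon j h2n hj.2
    omega
  have hcard : (Finset.Ico (m - f) m).card = f := by
    rw [Nat.card_Ico]; omega
  have hsum_lb : f * (4 * K + 1) ≤ ∑ j ∈ Finset.Ico (m - f) m, s u j := by
    calc f * (4 * K + 1) = (Finset.Ico (m - f) m).card • (4 * K + 1) := by
          rw [hcard, smul_eq_mul]
    _ ≤ _ := Finset.card_nsmul_le_sum _ _ _ hlb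
  have hpm : p u m ≤ K * m := hp m (by omega)
  have hKm : K * m ≤ K * (2 * f + 1) := Nat.mul_le_mul_left _ (by omega)
  have e1 : f * (4 * K + 1) = 4 * (K * f) + f := by ring
  have e2 : K * (2 * f + 1) = 2 * (K * f) + K := by ring
  have hP : K ≤ K * f := Nat.le_mul_of_pos_right K (by omega)
  omega

lemma s_bounded (K : ℕ) (hp : ∀ j, 1 ≤ j → p u j ≤ K * j) (m : ℕ) :
    s u m ≤ Fintype.card A * ((18 * K + 16) * (4 * K)) +
      Fintype.card A * Fintype.card A + Fintype.card A := by
  rcases Nat.lt_or_ge m 2 with hm | hm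
  · have h1 : s u m ≤ p u (m + 1) := Finset.card_filter_le _ _
    interval_cases m
    · have h1' : s u 0 ≤ p u 1 := h1
      have h2 := p_le_card u 1
      have h3 : Fintype.card A ^ 1 = Fintype.card A := pow_one _
      omega
    · have h1' : s u 1 ≤ p u 2 := h1
      have h2 := p_le_card u 2
      have h3 : Fintype.card A ^ 2 = Fintype.card A * Fintype.card A := sq _
      omega
  · obtain ⟨n, h2n, hnm, hsn⟩ := exists_good u K m hm hp
    have hℓ : 1 ≤ m - n := by omega
    have hℓn : m - n ≤ n := by omega
    have hp6 : p u (6 * n) ≤ K * (6 * n) := hp (6 * n) (by omega)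
    have hchain := s_le_chain u K n (m - n) hℓ hℓn hp6
    rw [show m - n + n = m by omega] at hchain
    have hfin : s u m ≤ Fintype.card A * ((18 * K + 16) * (4 * K)) := by
      calc s u m ≤ Fintype.card A * ((18 * K + 16) * s u n) := hchain
      _ ≤ Fintype.card A * ((18 * K + 16) * (4 * K)) := by gcongr
    omega

end

end Cassaigne

/-- Cassaigne: `p_u(n) ≤ K·n` for some `K` and all `n ≥ 1` iff the first
differences `p_u(n+1) − p_u(n)` are bounded. -/
theorem linear_complexity_iff_bounded_differences {A : Type*} [Fintype A] (u : ℕ → A) :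
    (∃ K : ℕ, ∀ n : ℕ, 1 ≤ n → complexityN u n ≤ K * n) ↔
    (∃ C : ℕ, ∀ n : ℕ, complexityN u (n + 1) - complexityN u n ≤ C) := by
  constructor
  · rintro ⟨K, hK⟩
    refine ⟨Fintype.card A * ((18 * K + 16) * (4 * K)) +
      Fintype.card A * Fintype.card A + Fintype.card A, fun n => ?_⟩
    rw [Cassaigne.complexityN_eq_p, Cassaigne.complexityN_eq_p, Cassaigne.s_eq_sub]
    exact Cassaigne.s_bounded u K (fun j hj => by
      rw [← Cassaigne.complexityN_eq_p]; exact hK j hj) n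
  · rintro ⟨C, hC⟩
    refine ⟨C + 1, fun n hn => ?_⟩
    have hs : ∀ k, Cassaigne.s u k ≤ C := by
      intro k
      rw [← Cassaigne.s_eq_sub, ← Cassaigne.complexityN_eq_p, ← Cassaigne.complexityN_eq_p]
      exact hC k
    have hstep : ∀ k, Cassaigne.p u k ≤ 1 + C * k := by
      intro k
      induction k with
      | zero =>
        simpa using Cassaigne.p_le_card u 0
      | succ k ih =>
        rw [Cassaigne.p_succ]
        have := hs k
        calc Cassaigne.p u k + Cassaigne.s u k ≤ (1 + C * k) + C := by omega
        _ ≤ 1 + C * (k + 1) := by ring_nf; omega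
    rw [Cassaigne.complexityN_eq_p]
    calc Cassaigne.p u n ≤ 1 + C * n := hstep n
    _ ≤ (C + 1) * n := by nlinarith
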